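/- Let K be a field of characteristic ≠ 2, B ∈ GL_n(K) symmetric, and g ∈ GL_n(K) an isometry of B, i.e. g B gᵀ = B. Let P be the characteristic polynomial of g and assume P(1)·P(−1) ≠ 0. Then n is even and det(g) = 1. -/

import Mathlib

open Matrix Polynomial

lemma eval_charpoly_aux {K : Type*} [Field K] {n : ℕ} (M : Matrix (Fin n) (Fin n) K) (r : K) :
    M.charpoly.eval r = (r • (1 : Matrix (Fin n) (Fin n) K) - M).det := by
  rw [Matrix.charpoly, _root_.eval_det, matPolyEquiv_charmatrix]
  congr 1
  simp [Matrix.scalar_apply, Matrix.smul_one_eq_diagonal]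

/-- Let `K` be a field of characteristic ≠ 2, `B ∈ GL_n(K)` symmetric and
`g ∈ GL_n(K)` an isometry of `B`, i.e. `g B gᵀ = B`.  If the characteristic
polynomial `P` of `g` satisfies `P(1)·P(-1) ≠ 0`, then `n` is even and `det g = 1`. -/
theorem even_dim_and_det_one_of_isometry
    {K : Type*} [Field K] (h2 : (2 : K) ≠ 0) {n : ℕ}
    (B : Matrix (Fin n) (Fin n) K) (hBunit : IsUnit B.det) (hBsym : Bᵀ = B)
    (g : Matrix (Fin n) (Fin n) K) (hgunit : IsUnit g.det)
    (hiso : g * B * gᵀ = B)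
    (hP : g.charpoly.eval 1 * g.charpoly.eval (-1) ≠ 0) :
    Even n ∧ g.det = 1 := by
  have hginv : g * g⁻¹ = 1 := Matrix.mul_nonsing_inv g hgunit
  have hginv' : g⁻¹ * g = 1 := Matrix.nonsing_inv_mul g hgunit
  -- g is conjugate to (g⁻¹)ᵀ
  have hconj : g = B * (g⁻¹)ᵀ * B⁻¹ := by
    have h1 : g * B = B * (g⁻¹)ᵀ := by
      have : g * B * (gᵀ * (g⁻¹)ᵀ) = B * (g⁻¹)ᵀ := by
        rw [← Matrix.mul_assoc, hiso]
      rwa [← Matrix.transpose_mul, hginv', Matrix.transpose_one, Matrix.mul_one] at this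
    calc g = g * B * B⁻¹ := by
            rw [Matrix.mul_assoc, Matrix.mul_nonsing_inv B hBunit, Matrix.mul_one]
      _ = B * (g⁻¹)ᵀ * B⁻¹ := by rw [h1]
  have hcp : ∀ r : K, g.charpoly.eval r = (g⁻¹).charpoly.eval r := by
    intro r
    rw [eval_charpoly_aux, eval_charpoly_aux]
    have h3 : r • (1 : Matrix (Fin n) (Fin n) K) - g = B * (r • 1 - (g⁻¹)ᵀ) * B⁻¹ := by
      rw [Matrix.mul_sub, Matrix.sub_mul, Matrix.mul_smul, Matrix.mul_one, Matrix.smul_mul,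
        Matrix.mul_nonsing_inv B hBunit, ← hconj]
    rw [h3, Matrix.det_mul, Matrix.det_mul, mul_comm, ← mul_assoc, ← Matrix.det_mul,
      Matrix.nonsing_inv_mul B hBunit, Matrix.det_one, one_mul]
    rw [show r • (1 : Matrix (Fin n) (Fin n) K) - (g⁻¹)ᵀ = (r • 1 - g⁻¹)ᵀ by
      rw [Matrix.transpose_sub, Matrix.transpose_smul, Matrix.transpose_one]]
    rw [Matrix.det_transpose]
  have hd1 : g.charpoly.eval 1 ≠ 0 := fun h => hP (by rw [h, zero_mul])
  have hd2 : g.charpoly.eval (-1) ≠ 0 := fun h => hP (by rw [h, mul_zero])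
  -- eval at 1
  have e1 : g.charpoly.eval 1 = (1 - g).det := by
    rw [eval_charpoly_aux]; simp
  have e1' : (g⁻¹).charpoly.eval 1 = g⁻¹.det * ((-1 : K) ^ n * (1 - g).det) := by
    rw [eval_charpoly_aux, one_smul]
    have h4 : (1 : Matrix (Fin n) (Fin n) K) - g⁻¹ = g⁻¹ * (-(1 - g)) := by
      rw [Matrix.mul_neg, Matrix.mul_sub, hginv', Matrix.mul_one, neg_sub]
    rw [h4, Matrix.det_mul, Matrix.det_neg, Fintype.card_fin]
  have e2 : g.charpoly.eval (-1) = (-1 : K) ^ n * (1 + g).det := by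
    rw [eval_charpoly_aux]
    have h6 : (-1 : K) • (1 : Matrix (Fin n) (Fin n) K) - g = -(1 + g) := by
      rw [neg_smul, one_smul]; abel
    rw [h6, Matrix.det_neg]
    simp
  have e2' : (g⁻¹).charpoly.eval (-1) = g⁻¹.det * ((-1 : K) ^ n * (1 + g).det) := by
    rw [eval_charpoly_aux]
    have h7 : (-1 : K) • (1 : Matrix (Fin n) (Fin n) K) - g⁻¹ = g⁻¹ * (-(1 + g)) := by
      rw [Matrix.mul_neg, Matrix.mul_add, hginv', Matrix.mul_one, neg_smul, one_smul, neg_add]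
      abel
    rw [h7, Matrix.det_mul, Matrix.det_neg, Fintype.card_fin]
  have hdetinv : g⁻¹.det = g.det⁻¹ := by
    rw [Matrix.det_nonsing_inv, Ring.inverse_eq_inv]
  -- from eval at -1 : det g = 1
  have key2 : g.charpoly.eval (-1) = g⁻¹.det * g.charpoly.eval (-1) := by
    conv_lhs => rw [hcp (-1), e2', ← e2]
  have hinv1 : g⁻¹.det = 1 := by
    have h0 : (g⁻¹.det - 1) * g.charpoly.eval (-1) = 0 := by linear_combination -key2
    rcases mul_eq_zero.mp h0 with h | h
    · exact sub_eq_zero.mp h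
    · exact absurd h hd2
  have hdet1 : g.det = 1 := by
    have h8 := Matrix.det_mul g g⁻¹
    rw [hginv, Matrix.det_one, hinv1, mul_one] at h8
    exact h8.symm
  -- from eval at 1 : (-1)^n = 1
  have key1 : g.charpoly.eval 1 = (-1 : K) ^ n * g.charpoly.eval 1 := by
    conv_lhs => rw [hcp 1, e1', hinv1, one_mul, ← e1]
  have hn : ((-1 : K)) ^ n = 1 := by
    have h0 : ((-1 : K) ^ n - 1) * g.charpoly.eval 1 = 0 := by linear_combination -key1
    rcases mul_eq_zero.mp h0 with h | h
    · exact sub_eq_zero.mp h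
    · exact absurd h hd1
  have hneven : Even n := by
    rcases Nat.even_or_odd n with h | h
    · exact h
    · exfalso
      rw [h.neg_one_pow] at hn
      have : (2 : K) = 0 := by linear_combination -hn
      exact h2 this
  exact ⟨hneven, hdet1⟩
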